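/- Fix integers m ≥ 1, n' ≥ 0 and let K be any {0,…,m+n'}-valued random variable. Draw X | K ~ Hypergeom(m+n', K, m). Then E[X/(1+K−X)] ≤ m/(1+n'). -/

import Mathlib

open Finset

lemma vander (a b k : ℕ) :
    ∑ y ∈ Finset.range (k + 1), (a.choose y : ℝ) * (b.choose (k - y) : ℝ)
      = ((a + b).choose k : ℝ) := by
  rw [Nat.add_choose_eq]
  rw [Finset.Nat.sum_antidiagonal_eq_sum_range_succ_mk]
  push_cast
  rfl

lemma inner_le (m n' κ : ℕ) (hm : 1 ≤ m) (hκ : κ ≤ m + n') :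
    ∑ x ∈ Finset.range (min m κ + 1),
        ((x : ℝ) / (1 + (κ : ℝ) - (x : ℝ))) *
          (((Nat.choose κ x : ℝ) * (Nat.choose (m + n' - κ) (m - x) : ℝ)) /
            (Nat.choose (m + n') m : ℝ))
      ≤ (m : ℝ) / (1 + (n' : ℝ)) := by
  set N := m + n' with hN
  have hmN : m ≤ N := Nat.le_add_right _ _
  have hCpos : (0 : ℝ) < (N.choose m : ℝ) := by
    exact_mod_cast Nat.choose_pos hmN
  -- rewrite each term
  have hterm : ∀ y ∈ Finset.range (min m κ),
      ((((y+1) : ℕ) : ℝ) / (1 + (κ : ℝ) - ((y+1 : ℕ) : ℝ))) *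
          (((Nat.choose κ (y+1) : ℝ) * (Nat.choose (N - κ) (m - (y+1)) : ℝ)) /
            (N.choose m : ℝ))
      = ((Nat.choose κ y : ℝ) * (Nat.choose (N - κ) (m - 1 - y) : ℝ)) /
            (N.choose m : ℝ) := by
    intro y hy
    rw [Finset.mem_range] at hy
    have hyκ : y < κ := lt_of_lt_of_le hy (min_le_right _ _)
    have hpos : (0 : ℝ) < 1 + (κ : ℝ) - ((y+1 : ℕ) : ℝ) := by
      push_cast
      have : (y : ℝ) < κ := by exact_mod_cast hyκ
      linarith
    have hid : (Nat.choose κ (y+1) : ℝ) * ((y+1 : ℕ) : ℝ)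
        = (Nat.choose κ y : ℝ) * ((κ : ℝ) - (y : ℝ)) := by
      have := Nat.choose_succ_right_eq κ y
      have hc : ((κ - y : ℕ) : ℝ) = (κ : ℝ) - (y : ℝ) := by
        rw [Nat.cast_sub hyκ.le]
      calc (Nat.choose κ (y+1) : ℝ) * ((y+1 : ℕ) : ℝ)
          = ((Nat.choose κ (y+1) * (y+1) : ℕ) : ℝ) := by push_cast; ring
        _ = ((Nat.choose κ y * (κ - y) : ℕ) : ℝ) := by rw [this]
        _ = (Nat.choose κ y : ℝ) * ((κ : ℝ) - (y : ℝ)) := by push_cast [hyκ.le]; ring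
    have h2 : m - (y+1) = m - 1 - y := by omega
    rw [h2]
    rw [div_mul_div_comm, div_eq_div_iff (by positivity) (by positivity)]
    have he : (1 + (κ : ℝ) - ((y+1 : ℕ) : ℝ)) = (κ : ℝ) - (y : ℝ) := by
      push_cast; ring
    rw [he] at *
    push_cast at hid ⊢
    linear_combination ((N - κ).choose (m - 1 - y) : ℝ) * (N.choose m : ℝ) * hid
  -- peel off x = 0
  rw [Finset.sum_range_succ']
  simp only [Nat.cast_zero, zero_div, zero_mul, add_zero]
  rw [Finset.sum_congr rfl hterm]
  rw [← Finset.sum_div]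
  -- bound the numerator sum by Vandermonde
  have hsub : Finset.range (min m κ) ⊆ Finset.range m :=
    Finset.range_subset_range.2 (min_le_left _ _)
  have hle : ∑ y ∈ Finset.range (min m κ),
      (Nat.choose κ y : ℝ) * (Nat.choose (N - κ) (m - 1 - y) : ℝ)
      ≤ ∑ y ∈ Finset.range m,
      (Nat.choose κ y : ℝ) * (Nat.choose (N - κ) (m - 1 - y) : ℝ) := by
    apply Finset.sum_le_sum_of_subset_of_nonneg hsub
    intro i _ _
    positivity
  have hrange : Finset.range m = Finset.range ((m-1) + 1) := by
    congr 1; omega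
  have hvand : ∑ y ∈ Finset.range m,
      (Nat.choose κ y : ℝ) * (Nat.choose (N - κ) (m - 1 - y) : ℝ)
      = (N.choose (m-1) : ℝ) := by
    rw [hrange]
    have := vander κ (N - κ) (m - 1)
    rw [Nat.add_sub_cancel' hκ] at this
    exact this
  have hratio : (N.choose (m-1) : ℝ) / (N.choose m : ℝ) = (m : ℝ) / (1 + (n' : ℝ)) := by
    have hnat : N.choose m * m = N.choose (m-1) * (n' + 1) := by
      have := Nat.choose_succ_right_eq N (m-1)
      have h1 : m - 1 + 1 = m := by omega
      have h2 : N - (m - 1) = n' + 1 := by omega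
      rw [h1, h2] at this
      exact this
    rw [div_eq_div_iff hCpos.ne' (by positivity)]
    have := congrArg (fun x : ℕ => (x : ℝ)) hnat
    push_cast at this
    linarith
  calc (∑ y ∈ Finset.range (min m κ),
      (Nat.choose κ y : ℝ) * (Nat.choose (N - κ) (m - 1 - y) : ℝ)) / (N.choose m : ℝ)
      ≤ (N.choose (m-1) : ℝ) / (N.choose m : ℝ) := by
        gcongr
        rw [← hvand]; exact hle
    _ = (m : ℝ) / (1 + (n' : ℝ)) := hratio

theorem hypergeom_ratio_expectation_le_random_K
    (m n' : ℕ) (hm : 1 ≤ m)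
    (w : ℕ → ℝ) (hw : ∀ κ, 0 ≤ w κ)
    (hsum : ∑ κ ∈ Finset.range (m + n' + 1), w κ = 1) :
    ∑ κ ∈ Finset.range (m + n' + 1), w κ *
        (∑ x ∈ Finset.range (min m κ + 1),
          ((x : ℝ) / (1 + (κ : ℝ) - (x : ℝ))) *
            (((Nat.choose κ x : ℝ) * (Nat.choose (m + n' - κ) (m - x) : ℝ)) /
              (Nat.choose (m + n') m : ℝ)))
      ≤ (m : ℝ) / (1 + (n' : ℝ)) := by
  calc ∑ κ ∈ Finset.range (m + n' + 1), w κ *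
        (∑ x ∈ Finset.range (min m κ + 1),
          ((x : ℝ) / (1 + (κ : ℝ) - (x : ℝ))) *
            (((Nat.choose κ x : ℝ) * (Nat.choose (m + n' - κ) (m - x) : ℝ)) /
              (Nat.choose (m + n') m : ℝ)))
      ≤ ∑ κ ∈ Finset.range (m + n' + 1), w κ * ((m : ℝ) / (1 + (n' : ℝ))) := by
        apply Finset.sum_le_sum
        intro κ hκ
        rw [Finset.mem_range] at hκ
        exact mul_le_mul_of_nonneg_left (inner_le m n' κ hm (by omega)) (hw κ)
    _ = (m : ℝ) / (1 + (n' : ℝ)) := by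
        rw [← Finset.sum_mul, hsum, one_mul]
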